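/- arXiv:1005.2369 — 4 statements merged into one kernel-verified Lean document; each statement's English description precedes it below -/
import Mathlib

section
/- If ξ : [0,∞) → E is left-continuous with right limits and ℓ : [0,∞) → [0,∞) is non-decreasing and left-continuous, then ξ ∘ ℓ is left-continuous with right limits. -/
open Filter Topology Set Function MeasureTheory NNReal

noncomputable section

/-- Right-continuous with left limits (rcll / càdlàg) on `[0,∞)`. -/
def Cadlag {E : Type*} [TopologicalSpace E] (f : ℝ≥0 → E) : Prop :=
  (∀ t : ℝ≥0, Tendsto f (𝓝[>] t) (𝓝 (f t))) ∧
    ∀ t : ℝ≥0, 0 < t → ∃ l, Tendsto f (𝓝[<] t) (𝓝 l)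

/-- Left-continuous with right limits (lcrl) on `[0,∞)`. -/
def Lcrl {E : Type*} [TopologicalSpace E] (f : ℝ≥0 → E) : Prop :=
  (∀ t : ℝ≥0, 0 < t → Tendsto f (𝓝[<] t) (𝓝 (f t))) ∧
    ∀ t : ℝ≥0, ∃ l, Tendsto f (𝓝[>] t) (𝓝 l)

/-- Generalized (right-continuous) inverse `σ⁻¹(t) = inf {s ≥ 0 : σ(s) > t}`. -/
def ginv (σ : ℝ≥0 → ℝ≥0) (t : ℝ≥0) : ℝ≥0 := sInf {s : ℝ≥0 | t < σ s}

/-- Left-continuous version `f⁻` of a path: `f⁻(t) = f(t-)` for `t > 0`, `f⁻(0) = f(0)`. -/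
def lver {E : Type*} [TopologicalSpace E] (f : ℝ≥0 → E) : ℝ≥0 → E :=
  fun t => if t = 0 then f 0 else leftLim f t

/-- Right-continuous version `f⁺` of a path: `f⁺(t) = f(t+)`. -/
def rver {E : Type*} [TopologicalSpace E] (f : ℝ≥0 → E) : ℝ≥0 → E :=
  fun t => rightLim f t

/-- if `ξ` is lcrl into a metric space and `ℓ : [0,∞) → [0,∞)` is
non-decreasing and left-continuous, then `ξ ∘ ℓ` is lcrl. -/
theorem stmt3 {E : Type*} [MetricSpace E] (ξ : ℝ≥0 → E) (hξ : Lcrl ξ)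
    (ℓ : ℝ≥0 → ℝ≥0) (hmono : Monotone ℓ)
    (hlc : ∀ t : ℝ≥0, 0 < t → Tendsto ℓ (𝓝[<] t) (𝓝 (ℓ t))) :
    Lcrl (ξ ∘ ℓ) := by
  constructor
  · intro t ht
    by_cases h : ∃ s, s < t ∧ ℓ s = ℓ t
    · obtain ⟨s, hst, hs⟩ := h
      have hev : ∀ᶠ u in 𝓝[<] t, (fun _ => ξ (ℓ t)) u = (ξ ∘ ℓ) u := by
        filter_upwards [Ioo_mem_nhdsLT_of_mem ⟨hst, le_refl t⟩] with u hu
        have h1 : ℓ s ≤ ℓ u := hmono hu.1.le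
        have h2 : ℓ u ≤ ℓ t := hmono hu.2.le
        simp [Function.comp, le_antisymm h2 (hs ▸ h1)]
      exact Tendsto.congr' hev tendsto_const_nhds
    · push_neg at h
      have hlt : ∀ s, s < t → ℓ s < ℓ t := fun s hs =>
        lt_of_le_of_ne (hmono hs.le) (h s hs)
      have hpos : 0 < ℓ t := lt_of_le_of_lt zero_le (hlt 0 ht)
      have hT : Tendsto ℓ (𝓝[<] t) (𝓝[<] (ℓ t)) :=
        tendsto_nhdsWithin_of_tendsto_nhds_of_eventually_within _ (hlc t ht)
          (eventually_nhdsWithin_of_forall fun u hu => hlt u hu)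
      exact (hξ.1 (ℓ t) hpos).comp hT
  · intro t
    set L := sInf (ℓ '' Ioi t) with hL
    have hT : Tendsto ℓ (𝓝[>] t) (𝓝 L) := hmono.tendsto_nhdsGT t
    have hLle : ∀ u, t < u → L ≤ ℓ u := fun u hu =>
      csInf_le (OrderBot.bddBelow _) ⟨u, hu, rfl⟩
    by_cases h : ∃ s, t < s ∧ ℓ s = L
    · obtain ⟨s, hts, hs⟩ := h
      refine ⟨ξ L, ?_⟩
      have hev : ∀ᶠ u in 𝓝[>] t, (fun _ => ξ L) u = (ξ ∘ ℓ) u := by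
        filter_upwards [Ioo_mem_nhdsGT_of_mem ⟨le_refl t, hts⟩] with u hu
        have h2 : ℓ u ≤ L := hs ▸ hmono hu.2.le
        simp [Function.comp, le_antisymm h2 (hLle u hu.1)]
      exact Tendsto.congr' hev tendsto_const_nhds
    · push_neg at h
      have hlt : ∀ s, t < s → L < ℓ s := fun s hs =>
        lt_of_le_of_ne (hLle s hs) (fun e => h s hs e.symm)
      obtain ⟨l, hl⟩ := hξ.2 L
      refine ⟨l, hl.comp ?_⟩
      exact tendsto_nhdsWithin_of_tendsto_nhds_of_eventually_within _ hT
        (eventually_nhdsWithin_of_forall fun u hu => hlt u hu)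
end
end

section
/- Let β : [0,∞) → ℝ^d and σ : [0,∞) → [0,∞) be rcll with σ strictly increasing and unbounded, and let ℓ = σ⁻¹. If β and σ have no common discontinuity points, then the left-limit function of the rcll regularization of β⁻ ∘ ℓ⁻ equals the left-limit function of β ∘ ℓ; consequently the lagging limit process (β⁻ ∘ ℓ⁻)⁺ equals the leading limit process β ∘ ℓ. -/
open Filter Topology Set Function MeasureTheory NNReal

noncomputable section

section Aux

variable {σ : ℝ≥0 → ℝ≥0}

lemma ginv_mono (hub : ∀ M : ℝ≥0, ∃ s, M < σ s) : Monotone (ginv σ) := fun a b hab =>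
  csInf_le_csInf (OrderBot.bddBelow _) (hub b) fun s hs => hab.trans_lt hs

lemma ginv_le {t x : ℝ≥0} (h : t < σ x) : ginv σ t ≤ x :=
  csInf_le (OrderBot.bddBelow _) h

lemma lt_sigma_of_ginv_lt (hub : ∀ M : ℝ≥0, ∃ s, M < σ s) (hsm : StrictMono σ)
    {t x : ℝ≥0} (h : ginv σ t < x) : t < σ x := by
  obtain ⟨s₀, hs₀, hlt⟩ := exists_lt_of_csInf_lt (hub t) h
  exact hs₀.trans_le (hsm.monotone hlt.le)

lemma sigma_le_of_lt_ginv {t x : ℝ≥0} (h : x < ginv σ t) : σ x ≤ t := by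
  by_contra h'
  exact absurd (ginv_le (not_le.1 h' : t < σ x)) h.not_ge

lemma le_sigma_ginv (hσ : Cadlag σ) (hsm : StrictMono σ)
    (hub : ∀ M : ℝ≥0, ∃ s, M < σ s) (t : ℝ≥0) : t ≤ σ (ginv σ t) := by
  refine ge_of_tendsto (hσ.1 (ginv σ t)) ?_
  filter_upwards [self_mem_nhdsWithin] with s hs
  exact (lt_sigma_of_ginv_lt hub hsm hs).le

lemma ginv_right_tendsto (hsm : StrictMono σ) (hub : ∀ M : ℝ≥0, ∃ s, M < σ s)
    (t : ℝ≥0) : Tendsto (ginv σ) (𝓝[>] t) (𝓝 (ginv σ t)) := by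
  refine tendsto_order.2 ⟨fun a ha => ?_, fun b hb => ?_⟩
  · filter_upwards [self_mem_nhdsWithin] with s hs
    exact ha.trans_le (ginv_mono hub (le_of_lt hs))
  · obtain ⟨b', hb'1, hb'2⟩ := exists_between hb
    have hσb' : t < σ b' := lt_sigma_of_ginv_lt hub hsm hb'1
    filter_upwards [Ioo_mem_nhdsGT hσb'] with s hs
    exact (ginv_le hs.2).trans_lt hb'2

lemma ginv_leftLim (hsm : StrictMono σ) (hub : ∀ M : ℝ≥0, ∃ s, M < σ s)
    {t : ℝ≥0} (ht : 0 < t) : leftLim (ginv σ) t = ginv σ t := by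
  have hne : NeBot (𝓝[<] t) := nhdsWithin_Iio_self_neBot' ⟨0, ht⟩
  refine leftLim_eq_of_tendsto (h := hne) ?_
  refine tendsto_order.2 ⟨fun a ha => ?_, fun b hb => ?_⟩
  · obtain ⟨a', ha'1, ha'2⟩ := exists_between ha
    obtain ⟨a'', ha''1, ha''2⟩ := exists_between ha'1
    have h1 : σ a' ≤ t := sigma_le_of_lt_ginv ha'2
    have h2 : σ a'' < t := (hsm ha''2).trans_le h1
    filter_upwards [Ioo_mem_nhdsLT h2] with s hs
    by_contra hc
    push_neg at hc
    exact absurd (lt_sigma_of_ginv_lt hub hsm (hc.trans_lt ha''1)) hs.1.not_gt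
  · filter_upwards [self_mem_nhdsWithin] with s hs
    exact (ginv_mono hub (le_of_lt hs)).trans_lt hb

lemma lver_tendsto_right {d : ℕ} {β : ℝ≥0 → (Fin d → ℝ)} (hβ : Cadlag β) (u : ℝ≥0) :
    Tendsto (lver β) (𝓝[>] u) (𝓝 (β u)) := by
  rw [(closed_nhds_basis (β u)).tendsto_right_iff]
  rintro V ⟨hV, hVc⟩
  have h1 : ∀ᶠ w in 𝓝[>] u, β w ∈ V := (hβ.1 u).eventually_mem hV
  obtain ⟨c, hc, hsub⟩ := (nhdsGT_basis u).eventually_iff.1 h1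
  filter_upwards [Ioo_mem_nhdsGT hc] with v hv
  have hv0 : 0 < v := lt_of_le_of_lt (zero_le (a := u)) hv.1
  have hne : NeBot (𝓝[<] v) := nhdsWithin_Iio_self_neBot' ⟨u, hv.1⟩
  obtain ⟨l, hl⟩ := hβ.2 v hv0
  have hll : leftLim β v = l := leftLim_eq_of_tendsto (h := hne) hl
  show (if v = 0 then β 0 else leftLim β v) ∈ V
  rw [if_neg hv0.ne', hll]
  refine hVc.mem_of_tendsto hl ?_
  filter_upwards [Ioo_mem_nhdsLT hv.1] with w hw
  exact hsub ⟨hw.1, hw.2.trans hv.2⟩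

end Aux

/-- if `β : [0,∞) → ℝ^d` and `σ` are rcll, `σ` strictly increasing and
unbounded with (continuous) inverse `ℓ = σ⁻¹`, and `β`, `σ` share no discontinuity
point, then the left-limit function of `(β⁻ ∘ ℓ⁻)⁺` equals that of `β ∘ ℓ`, and
consequently the lagging process `(β⁻ ∘ ℓ⁻)⁺` equals the leading process `β ∘ ℓ`. -/
theorem stmt6 {d : ℕ} (β : ℝ≥0 → (Fin d → ℝ)) (σ : ℝ≥0 → ℝ≥0)
    (hβ : Cadlag β) (hσ : Cadlag σ) (hsm : StrictMono σ)
    (hub : ∀ M : ℝ≥0, ∃ s, M < σ s)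
    (hdisj : ∀ u : ℝ≥0, ContinuousAt β u ∨ ContinuousAt σ u) :
    (∀ t : ℝ≥0, 0 < t →
        leftLim (rver (lver β ∘ lver (ginv σ))) t = leftLim (β ∘ ginv σ) t) ∧
      rver (lver β ∘ lver (ginv σ)) = β ∘ ginv σ := by
  have hlv : lver (ginv σ) = ginv σ := by
    funext t
    show (if t = 0 then ginv σ 0 else leftLim (ginv σ) t) = ginv σ t
    split_ifs with h
    · rw [h]
    · exact ginv_leftLim hsm hub (pos_iff_ne_zero.mpr h)
  have key : rver (lver β ∘ lver (ginv σ)) = β ∘ ginv σ := by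
    rw [hlv]
    funext t
    have hne : (𝓝[>] t).NeBot := inferInstance
    show rightLim (lver β ∘ ginv σ) t = β (ginv σ t)
    rcases eq_or_lt_of_le (le_sigma_ginv hσ hsm hub t) with heq | hlt
    · -- no flat part to the right: `ginv σ` strictly increases after `t`
      apply rightLim_eq_of_tendsto (h := hne)
      have hst : Tendsto (ginv σ) (𝓝[>] t) (𝓝[>] (ginv σ t)) := by
        rw [tendsto_nhdsWithin_iff]
        refine ⟨ginv_right_tendsto hsm hub t, ?_⟩
        filter_upwards [self_mem_nhdsWithin] with s hs
        rcases lt_or_eq_of_le (ginv_mono hub (le_of_lt hs)) with h | h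
        · exact h
        · exfalso
          have h2 : s ≤ σ (ginv σ s) := le_sigma_ginv hσ hsm hub s
          rw [← h, ← heq] at h2
          exact absurd h2 (not_le.2 hs)
      exact (lver_tendsto_right hβ (ginv σ t)).comp hst
    · -- `ginv σ` is constant on `[t, σ (ginv σ t))`
      have hconst : ∀ s ∈ Ioo t (σ (ginv σ t)), ginv σ s = ginv σ t := fun s hs =>
        le_antisymm (ginv_le hs.2) (ginv_mono hub hs.1.le)
      have htend : Tendsto (lver β ∘ ginv σ) (𝓝[>] t) (𝓝 (lver β (ginv σ t))) := by
        apply Tendsto.congr' _ tendsto_const_nhds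
        filter_upwards [Ioo_mem_nhdsGT hlt] with s hs
        simp [comp, hconst s hs]
      rw [rightLim_eq_of_tendsto (h := hne) htend]
      rcases eq_or_ne (ginv σ t) 0 with h0 | h0
      · show (if ginv σ t = 0 then β 0 else leftLim β (ginv σ t)) = β (ginv σ t)
        rw [if_pos h0, h0]
      · have hu : 0 < ginv σ t := pos_iff_ne_zero.mpr h0
        have hne' : NeBot (𝓝[<] (ginv σ t)) := nhdsWithin_Iio_self_neBot' ⟨0, hu⟩
        have hcont : ContinuousAt β (ginv σ t) := by
          rcases hdisj (ginv σ t) with h | h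
          · exact h
          · exfalso
            have hle : σ (ginv σ t) ≤ t := by
              refine le_of_tendsto
                (h.tendsto.mono_left (nhdsWithin_le_nhds (s := Iio (ginv σ t)))) ?_
              filter_upwards [self_mem_nhdsWithin] with x hx
              exact sigma_le_of_lt_ginv hx
            exact absurd hlt hle.not_gt
        show (if ginv σ t = 0 then β 0 else leftLim β (ginv σ t)) = β (ginv σ t)
        rw [if_neg h0]
        exact leftLim_eq_of_tendsto (h := hne')
          (hcont.tendsto.mono_left nhdsWithin_le_nhds)
  exact ⟨fun t _ => by rw [key], key⟩
end
end

section
/- Let S be a strictly increasing unbounded rcll function on [0,∞) with inverse L, and suppose t is a point such that S is continuous at L(t) and t lies in the closure of the range of S from both sides (t is both a left- and right-limit point of the range). Then L is continuous at t and both left- and right-increasing at t: s < t < u implies L(s) < L(t) < L(u). -/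
open Filter Topology Set Function MeasureTheory NNReal

noncomputable section

lemma ginv_le_of_lt (S : ℝ≥0 → ℝ≥0) {t a : ℝ≥0} (h : t < S a) : ginv S t ≤ a :=
  csInf_le (OrderBot.bddBelow _) h

lemma S_le_of_lt_ginv (S : ℝ≥0 → ℝ≥0) {t a : ℝ≥0} (h : a < ginv S t) : S a ≤ t := by
  by_contra h'
  exact absurd (ginv_le_of_lt S (not_le.1 h')) (not_le.2 h)

lemma lt_S_of_ginv_lt (S : ℝ≥0 → ℝ≥0) (hsm : StrictMono S) (hub : ∀ M : ℝ≥0, ∃ s, M < S s)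
    {t a : ℝ≥0} (h : ginv S t < a) : t < S a := by
  obtain ⟨b, hb, hba⟩ := (csInf_lt_iff (OrderBot.bddBelow _) (hub t)).1 h
  exact hb.trans_le (hsm.monotone hba.le)

lemma le_S_ginv (S : ℝ≥0 → ℝ≥0) (hS : Cadlag S) (hsm : StrictMono S)
    (hub : ∀ M : ℝ≥0, ∃ s, M < S s) (t : ℝ≥0) : t ≤ S (ginv S t) := by
  refine ge_of_tendsto (hS.1 (ginv S t)) ?_
  filter_upwards [self_mem_nhdsWithin] with a ha
  exact (lt_S_of_ginv_lt S hsm hub ha).le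

/-- let `S` be rcll, strictly increasing and unbounded with inverse `L`.
If `S` is continuous at `L(t)` and `t` is both a left- and a right-limit point of the
range of `S`, then `L` is continuous at `t` and both left- and right-increasing at
`t`: `s < t < u` implies `L(s) < L(t) < L(u)`. -/
theorem stmt16 (S : ℝ≥0 → ℝ≥0) (hS : Cadlag S) (hsm : StrictMono S)
    (hub : ∀ M : ℝ≥0, ∃ s, M < S s) (t : ℝ≥0)
    (hcont : ContinuousAt S (ginv S t))
    (hleft : t ∈ closure (Set.range S ∩ Set.Iio t))
    (hright : t ∈ closure (Set.range S ∩ Set.Ioi t)) :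
    ContinuousAt (ginv S) t ∧
      ∀ s u : ℝ≥0, s < t → t < u → ginv S s < ginv S t ∧ ginv S t < ginv S u := by
  set x := ginv S t with hx
  have hge : t ≤ S x := le_S_ginv S hS hsm hub t
  have hne : (Set.range S ∩ Set.Iio t).Nonempty := by
    by_contra h
    rw [Set.not_nonempty_iff_eq_empty] at h
    rw [h, closure_empty] at hleft
    exact hleft
  obtain ⟨y, ⟨u0, rfl⟩, hu0⟩ := hne
  have hu0x : u0 < x := by
    by_contra h
    exact absurd (hge.trans (hsm.monotone (not_lt.1 h))) (not_le.2 hu0)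
  have hSx : S x = t := by
    refine le_antisymm ?_ hge
    have hnb : (𝓝[<] x).NeBot := nhdsWithin_Iio_self_neBot' ⟨u0, hu0x⟩
    refine le_of_tendsto (hcont.tendsto.mono_left (nhdsWithin_le_nhds : 𝓝[<] x ≤ 𝓝 x)) ?_
    filter_upwards [self_mem_nhdsWithin] with a ha
    exact S_le_of_lt_ginv S ha
  have key_left : ∀ s, s < t → ginv S s < x := by
    intro s hs
    rw [mem_closure_iff] at hleft
    obtain ⟨y, hy⟩ := hleft (Set.Ioi s) isOpen_Ioi hs
    obtain ⟨hys, ⟨v, rfl⟩, hyt⟩ := hy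
    have hvx : v < x := by
      by_contra h
      exact absurd (hge.trans (hsm.monotone (not_lt.1 h))) (not_le.2 hyt)
    exact lt_of_le_of_lt (ginv_le_of_lt S hys) hvx
  have key_right : ∀ u, t < u → x < ginv S u := by
    intro u hu
    rcases lt_or_ge x (ginv S u) with h | h
    · exact h
    · exfalso
      have h1 : u ≤ S x := (le_S_ginv S hS hsm hub u).trans (hsm.monotone h)
      rw [hSx] at h1
      exact absurd hu (not_lt.2 h1)
  refine ⟨?_, fun s u hs hu => ⟨key_left s hs, key_right u hu⟩⟩
  rw [ContinuousAt, ← hx]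
  refine tendsto_order.2 ⟨?_, ?_⟩
  · intro c hc
    have hSc : S c < t := by rw [← hSx]; exact hsm hc
    filter_upwards [Ioi_mem_nhds hSc] with s hs
    by_contra h
    push_neg at h
    have hsc : s ≤ S c := by
      refine ge_of_tendsto (hS.1 c) ?_
      filter_upwards [self_mem_nhdsWithin] with w hw
      exact (lt_S_of_ginv_lt S hsm hub (lt_of_le_of_lt h hw)).le
    exact absurd hs (not_lt.2 hsc)
  · intro c hc
    obtain ⟨d, hxd, hdc⟩ := exists_between hc
    have hSd : t < S d := by rw [← hSx]; exact hsm hxd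
    filter_upwards [Iio_mem_nhds hSd] with s hs
    exact lt_of_le_of_lt (ginv_le_of_lt S hs) hdc
end
end

section
/- Let (β, σ) be an rcll path in ℝ^d × [0,∞) with σ non-decreasing and unbounded, ℓ = σ⁻¹. Define the lagging composition X = (β⁻ ∘ ℓ⁻)⁺ and leading composition Y = β ∘ ℓ. Then for each t ≥ 0 with σ(ℓ(t)) = t (i.e., t in the range of σ and ℓ right-increasing at t), X(t) = Y(t). -/
open Filter Topology Set Function MeasureTheory NNReal

noncomputable section

/-- let `(β, σ)` be rcll with `σ` non-decreasing and unbounded,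
`ℓ = σ⁻¹`, lagging composition `X = (β⁻ ∘ ℓ⁻)⁺` and leading composition
`Y = β ∘ ℓ`. If `t` satisfies `σ(ℓ(t)) = t` and `t` is a right-limit point of the
range of `σ`, then `X(t) = Y(t)`. -/
theorem stmt18 {d : ℕ} (β : ℝ≥0 → (Fin d → ℝ)) (σ : ℝ≥0 → ℝ≥0)
    (hβ : Cadlag β) (hσ : Cadlag σ) (hmono : Monotone σ)
    (hub : ∀ M : ℝ≥0, ∃ s, M < σ s)
    (t : ℝ≥0) (ht : σ (ginv σ t) = t)
    (hright : t ∈ closure (Set.range σ ∩ Set.Ioi t)) :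
    rver (lver β ∘ lver (ginv σ)) t = (β ∘ ginv σ) t := by
  classical
  set ℓ : ℝ≥0 → ℝ≥0 := ginv σ with hℓdef
  have hne : ∀ u : ℝ≥0, {s : ℝ≥0 | u < σ s}.Nonempty := fun u => hub u
  have hℓmono : Monotone ℓ := by
    intro a b hab
    exact le_csInf (hne b) fun s hs =>
      csInf_le (OrderBot.bddBelow _) (lt_of_le_of_lt hab hs)
  -- strict increase to the right of t
  have key : ∀ t'' : ℝ≥0, t < t'' → ℓ t < ℓ t'' := by
    intro t'' htt
    have h1 : Tendsto σ (𝓝[>] (ℓ t)) (𝓝 t) := by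
      have := hσ.1 (ℓ t); rwa [ht] at this
    have h2 : ∀ᶠ s in 𝓝[>] (ℓ t), σ s < t'' := h1.eventually_lt_const htt
    obtain ⟨c, hc, hIoo⟩ := mem_nhdsGT_iff_exists_Ioo_subset.1 h2
    have : c ≤ ℓ t'' := by
      apply le_csInf (hne t'')
      intro s hs
      simp only [mem_setOf_eq] at hs
      by_contra hcon
      push_neg at hcon
      have hsge : ℓ t ≤ s := csInf_le (OrderBot.bddBelow _) (lt_trans htt hs)
      rcases eq_or_lt_of_le hsge with h | h
      · rw [← h, ht] at hs; exact absurd hs (lt_asymm htt)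
      · exact absurd hs (lt_asymm (hIoo ⟨h, hcon⟩))
    exact lt_of_lt_of_le hc this
  -- the main limit
  have hmain : Tendsto (lver β ∘ lver ℓ) (𝓝[>] t) (𝓝 (β (ℓ t))) := by
    rw [Metric.tendsto_nhds]
    intro ε hε
    have hY : ∀ᶠ s in 𝓝[>] (ℓ t), dist (β s) (β (ℓ t)) < ε / 2 :=
      (Metric.tendsto_nhds.1 (hβ.1 (ℓ t))) (ε / 2) (half_pos hε)
    obtain ⟨b, hb, hIoo⟩ := mem_nhdsGT_iff_exists_Ioo_subset.1 hY
    obtain ⟨s₀, hs₀mem, hs₀lt⟩ :=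
      (csInf_lt_iff (OrderBot.bddBelow _) (hne t)).1 (show ℓ t < b from hb)
    have hIv : Ioo t (σ s₀) ∈ 𝓝[>] t := Ioo_mem_nhdsGT_of_mem ⟨le_rfl, hs₀mem⟩
    filter_upwards [hIv] with u hu
    obtain ⟨htu, hus⟩ := hu
    set x : ℝ≥0 := leftLim ℓ u with hxdef
    obtain ⟨m, hm1, hm2⟩ := exists_between htu
    have hx1 : ℓ t < x := lt_of_lt_of_le (key m hm1) (hℓmono.le_leftLim hm2)
    have hx2 : x ≤ s₀ :=
      le_trans (hℓmono.leftLim_le le_rfl) (csInf_le (OrderBot.bddBelow _) hus)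
    have hu0 : u ≠ 0 := (pos_of_gt htu).ne'
    have hx0 : 0 < x := lt_of_le_of_lt zero_le hx1
    have hgu : (lver β ∘ lver ℓ) u = leftLim β x := by
      simp [lver, hu0, hx0.ne', ← hxdef]
    rw [hgu]
    obtain ⟨l, hl⟩ := hβ.2 x hx0
    have hxne : (𝓝[<] x).NeBot := nhdsWithin_Iio_self_neBot' ⟨0, hx0⟩
    have hll : leftLim β x = l := leftLim_eq_of_tendsto (h := hxne) hl
    have hmem : Ioo (ℓ t) x ∈ 𝓝[<] x := Ioo_mem_nhdsLT_of_mem ⟨hx1, le_rfl⟩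
    have hball : l ∈ Metric.closedBall (β (ℓ t)) (ε / 2) := by
      apply Metric.isClosed_closedBall.mem_of_tendsto hl
      filter_upwards [hmem] with s hs
      exact Metric.mem_closedBall.2
        (le_of_lt (hIoo ⟨hs.1, lt_of_lt_of_le hs.2 (le_trans hx2 (le_of_lt hs₀lt))⟩))
    rw [hll]
    calc dist l (β (ℓ t)) ≤ ε / 2 := Metric.mem_closedBall.1 hball
      _ < ε := half_lt_self hε
  have hfinal : rightLim (lver β ∘ lver ℓ) t = β (ℓ t) :=
    rightLim_eq_of_tendsto hmain
  simpa [rver] using hfinal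
end
end
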